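/- Let κ > 0 and let F, K : ℝ → ℝ be functions such that K is twice differentiable with K″(V) = 0 for all V, F is differentiable with continuous derivative, and κ·F′(V)² + 2·K′(V)² = 2 for all V ∈ ℝ. Then there exist constants α ∈ [−1, 1], σ, K₀, F₀ ∈ ℝ with σ² = (2/κ)·(1−α²) such that K(V) = α·V + K₀ and F(V) = σ·V + F₀ for all V. -/

import Mathlib

/-- A function with derivative zero everywhere is constant. -/
lemma const_of_hasDerivAt_zero (f : ℝ → ℝ) (hf : ∀ x : ℝ, HasDerivAt f 0 x) :
    ∀ x : ℝ, f x = f 0 := by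
  intro x
  have hdiff : Differentiable ℝ f := fun x => (hf x).differentiableAt
  have hderiv : ∀ x : ℝ, deriv f x = 0 := fun x => (hf x).deriv
  exact is_const_of_deriv_eq_zero hdiff hderiv x 0

/-- the Buchdahl functional constraints K″ = 0 and
κF′² + 2K′² = 2 force K and F to be affine, K(V) = αV + K₀ and F(V) = σV + F₀,
with α ∈ [−1,1] and σ² = (2/κ)(1−α²). -/
theorem stmt_14 (κ : ℝ) (hκ : 0 < κ) (F K F' K' K'' : ℝ → ℝ)
    (hK1 : ∀ V : ℝ, HasDerivAt K (K' V) V)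
    (hK2 : ∀ V : ℝ, HasDerivAt K' (K'' V) V)
    (hK'' : ∀ V : ℝ, K'' V = 0)
    (hF1 : ∀ V : ℝ, HasDerivAt F (F' V) V)
    (hF'cont : Continuous F')
    (hcon : ∀ V : ℝ, κ * (F' V) ^ 2 + 2 * (K' V) ^ 2 = 2) :
    ∃ α σ K₀ F₀ : ℝ, α ∈ Set.Icc (-1 : ℝ) 1 ∧
      σ ^ 2 = (2 / κ) * (1 - α ^ 2) ∧
      (∀ V : ℝ, K V = α * V + K₀) ∧
      (∀ V : ℝ, F V = σ * V + F₀) := by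
  set α := K' 0 with hα
  set σ := F' 0 with hσ
  -- K' is constant
  have hK'const : ∀ V : ℝ, K' V = α := by
    intro V
    exact const_of_hasDerivAt_zero K' (fun x => by simpa [hK'' x] using hK2 x) V
  -- F'^2 is constant
  have hF'sq : ∀ V : ℝ, (F' V) ^ 2 = σ ^ 2 := by
    intro V
    have h1 := hcon V
    have h2 := hcon 0
    rw [hK'const V] at h1
    rw [hK'const 0] at h2
    nlinarith [hκ]
  -- F' is constant (continuous, values in {σ, -σ})
  have hF'const : ∀ V : ℝ, F' V = σ := by
    intro V
    by_contra h
    have hneg : F' V = -σ := by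
      have := hF'sq V
      have : (F' V - σ) * (F' V + σ) = 0 := by ring_nf; nlinarith [hF'sq V]
      rcases mul_eq_zero.mp this with h1 | h1
      · exact absurd (by linarith) h
      · linarith
    have hσne : σ ≠ 0 := fun h0 => h (by rw [hneg, h0, neg_zero])
    -- 0 lies between F' 0 = σ and F' V = -σ, so F' vanishes somewhere
    have hmem : (0 : ℝ) ∈ Set.uIcc (F' 0) (F' V) := by
      rw [hneg, ← hσ]
      rcases lt_or_gt_of_ne hσne with hlt | hgt
      · exact Set.mem_uIcc.mpr (Or.inl ⟨by linarith, by linarith⟩)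
      · exact Set.mem_uIcc.mpr (Or.inr ⟨by linarith, by linarith⟩)
    obtain ⟨w, _, hw⟩ := intermediate_value_uIcc (hF'cont.continuousOn (s := Set.uIcc 0 V)) hmem
    have := hF'sq w
    rw [hw] at this
    have : σ = 0 := by nlinarith
    exact hσne this
  refine ⟨α, σ, K 0, F 0, ?_, ?_, ?_, ?_⟩
  · have h := hcon 0
    rw [hK'const 0, ← hσ] at h
    constructor <;> nlinarith [sq_nonneg σ, hκ.le, mul_nonneg hκ.le (sq_nonneg σ)]
  · have h := hcon 0
    rw [hK'const 0, ← hσ] at h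
    field_simp
    linarith
  · intro V
    have : ∀ x : ℝ, K x - α * x = K 0 - α * 0 := by
      apply const_of_hasDerivAt_zero
      intro x
      have := (hK1 x).fun_sub ((hasDerivAt_id x).const_mul α)
      simpa [hK'const x] using this
    have := this V
    simp at this
    linarith
  · intro V
    have : ∀ x : ℝ, F x - σ * x = F 0 - σ * 0 := by
      apply const_of_hasDerivAt_zero
      intro x
      have := (hF1 x).fun_sub ((hasDerivAt_id x).const_mul σ)
      simpa [hF'const x] using this
    have := this V
    simp at this
    linarith
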